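/- There is a constant C depending only on the dimension n and the mollifier φ such that for every locally finite positive Borel measure σ on ℝ^n, every cube Q ∈ P^n, every 0 < ε ≤ ℓ(Q), and every x ∈ ℝ^n: M(1_Q σ_{8ε})(x) ≤ C · M(1_{B_Q(8ε)} σ)(x), where B_Q(δ) = ∪_{y ∈ Q} (y + [−δ,δ]^n) is the δ-enlargement of Q and σ_{8ε} = σ ∗ φ_{8ε}. -/

import Mathlib

open MeasureTheory Set Filter
open scoped ENNReal NNReal

noncomputable section

/-- An axis-parallel half-open cube in `ℝⁿ`, given by its lower corner and (positive)
side length. -/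
structure Cube (n : ℕ) where
  corner : Fin n → ℝ
  side : ℝ
  side_pos : 0 < side

namespace Cube

variable {n : ℕ}

/-- The underlying (half-open) set of the cube. -/
def toSet (Q : Cube n) : Set (Fin n → ℝ) :=
  {x | ∀ i, Q.corner i ≤ x i ∧ x i < Q.corner i + Q.side}

/-- The concentric dilate `ΓQ` of the cube `Q` (same center, side length `Γ·ℓ(Q)`),
as a set. -/
def dilate (Q : Cube n) (Γ : ℝ) : Set (Fin n → ℝ) :=
  {x | ∀ i, Q.corner i - (Γ - 1) * Q.side / 2 ≤ x i ∧
       x i < Q.corner i + Q.side + (Γ - 1) * Q.side / 2}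

/-- Membership in `𝒫ⁿ`: the side length is an integral power of `2`. -/
def memP (Q : Cube n) : Prop := ∃ ℓ : ℤ, Q.side = (2:ℝ) ^ ℓ

end Cube

/-- The translation applied at scale `2^ℓ` in the random dyadic grid determined by `β`:
`Σ_{j : 2^{-j} < 2^ℓ} 2^{-j} β_j`. -/
def gridShift {n : ℕ} (β : ℤ → Fin n → Bool) (ℓ : ℤ) (i : Fin n) : ℝ :=
  ∑' j : ℤ, if (2:ℝ) ^ (-j) < (2:ℝ) ^ ℓ ∧ β j i = true then (2:ℝ) ^ (-j) else 0

/-- Membership in the shifted dyadic grid `𝒟^β`. -/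
def memGrid {n : ℕ} (β : ℤ → Fin n → Bool) (Q : Cube n) : Prop :=
  ∃ (ℓ : ℤ) (k : Fin n → ℤ), Q.side = (2:ℝ) ^ ℓ ∧
    ∀ i, Q.corner i = (2:ℝ) ^ ℓ * (k i : ℝ) + gridShift β ℓ i

/-- The Hardy–Littlewood maximal function of a measure, over cubes in `𝒫ⁿ`. -/
def maximal {n : ℕ} (μ : Measure (Fin n → ℝ)) (x : Fin n → ℝ) : ℝ≥0∞ :=
  ⨆ (Q : Cube n) (_ : Q.memP) (_ : x ∈ Q.toSet), μ Q.toSet / volume Q.toSet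

/-- The dyadic maximal function relative to the grid `𝒟^β`. -/
def dyadicMaximal {n : ℕ} (β : ℤ → Fin n → Bool) (μ : Measure (Fin n → ℝ))
    (x : Fin n → ℝ) : ℝ≥0∞ :=
  ⨆ (Q : Cube n) (_ : memGrid β Q) (_ : x ∈ Q.toSet), μ Q.toSet / volume Q.toSet

/-- The two-weight Muckenhoupt constant `A₂(σ,ω)`. -/
def A2 {n : ℕ} (σ ω : Measure (Fin n → ℝ)) : ℝ≥0∞ :=
  ⨆ (Q : Cube n) (_ : Q.memP), (σ Q.toSet / volume Q.toSet) * (ω Q.toSet / volume Q.toSet)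

/-- The operator norm `𝔑_M(σ,ω)` of the maximal function from `L²(σ)` to `L²(ω)`:
the least `N` with `∫ M(fσ)² dω ≤ N² ∫ f² dσ` for all (nonnegative) `f`. -/
def opNorm {n : ℕ} (σ ω : Measure (Fin n → ℝ)) : ℝ≥0∞ :=
  sInf {N : ℝ≥0∞ | ∀ f : (Fin n → ℝ) → ℝ≥0∞, Measurable f →
    ∫⁻ x, (maximal (σ.withDensity f) x) ^ 2 ∂ω ≤ N ^ 2 * ∫⁻ x, (f x) ^ 2 ∂σ}

/-- `φ` is an admissible mollifier on `ℝⁿ`: smooth, `0 ≤ φ ≤ 1`, supported in `(−1,1)ⁿ`,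
at least `2^{−n}` on `(−5/8,5/8)ⁿ`, with `∫ φ = 1`. -/
def IsAdmissibleMollifier {n : ℕ} (φ : (Fin n → ℝ) → ℝ) : Prop :=
  ContDiff ℝ (⊤ : ℕ∞) φ ∧
  (∀ x, φ x ∈ Set.Icc (0:ℝ) 1) ∧
  (∀ x, φ x ≠ 0 → ∀ i, |x i| < 1) ∧
  (∀ x : Fin n → ℝ, (∀ i, |x i| < 5/8) → (2:ℝ) ^ (-(n:ℤ)) ≤ φ x) ∧
  (∫ x, φ x) = 1

/-- The mollification `ν_δ = ν ∗ φ_δ` of a measure `ν`, where `φ_δ(x) = δ^{−n} φ(x/δ)`: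
the measure with density `x ↦ ∫ φ_δ(x−y) dν(y)` with respect to Lebesgue measure. -/
def mollify {n : ℕ} (φ : (Fin n → ℝ) → ℝ) (δ : ℝ) (ν : Measure (Fin n → ℝ)) :
    Measure (Fin n → ℝ) :=
  volume.withDensity fun x => ∫⁻ y, ENNReal.ofReal ((δ ^ n)⁻¹ * φ (δ⁻¹ • (x - y))) ∂ν

/-- The `δ`-enlargement `B_Q(δ) = ∪_{y ∈ Q} (y + [−δ,δ]ⁿ)` of a cube `Q`. -/
def enlarge {n : ℕ} (Q : Cube n) (δ : ℝ) : Set (Fin n → ℝ) :=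
  {x | ∃ y ∈ Q.toSet, ∀ i, |x i - y i| ≤ δ}


namespace Cube
variable {n : ℕ}

lemma toSet_eq_pi (Q : Cube n) :
    Q.toSet = Set.pi Set.univ (fun i => Set.Ico (Q.corner i) (Q.corner i + Q.side)) := by
  ext x; simp [toSet, Set.mem_pi]

lemma measurableSet_toSet (Q : Cube n) : MeasurableSet Q.toSet := by
  rw [toSet_eq_pi]; exact MeasurableSet.univ_pi fun i => measurableSet_Ico

lemma volume_toSet (Q : Cube n) :
    volume Q.toSet = ENNReal.ofReal (Q.side ^ n) := by
  rw [toSet_eq_pi, volume_pi_pi]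
  simp [Real.volume_Ico, ENNReal.ofReal_pow Q.side_pos.le]

end Cube

/-- **Mollified maximal function controlled by the maximal function of the enlarged
restriction.** There is a constant `C` depending only on the dimension `n` and the
mollifier `φ` such that for every locally finite positive Borel measure `σ` on `ℝⁿ`,
every cube `Q ∈ 𝒫ⁿ`, every `0 < ε ≤ ℓ(Q)`, and every `x ∈ ℝⁿ`:
`M(1_Q σ_{8ε})(x) ≤ C · M(1_{B_Q(8ε)} σ)(x)`. -/
theorem mollified_maximal_enlargement
    {n : ℕ} (φ : (Fin n → ℝ) → ℝ) (hφ : IsAdmissibleMollifier φ) :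
    ∃ C : ℝ≥0∞, 0 < C ∧ C ≠ ⊤ ∧
      ∀ σ : Measure (Fin n → ℝ), IsLocallyFiniteMeasure σ →
      ∀ Q : Cube n, Q.memP →
      ∀ ε : ℝ, 0 < ε → ε ≤ Q.side →
      ∀ x : Fin n → ℝ,
        maximal ((mollify φ (8 * ε) σ).restrict Q.toSet) x
          ≤ C * maximal (σ.restrict (enlarge Q (8 * ε))) x := by
  obtain ⟨hsmooth, hrange, hsupp, -, -⟩ := hφ
  refine ⟨ENNReal.ofReal ((16:ℝ) ^ n), ENNReal.ofReal_pos.2 (by positivity),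
    ENNReal.ofReal_ne_top, ?_⟩
  intro σ hσ Q hQ ε hε hεQ x
  haveI := hσ
  haveI : SigmaFinite σ := inferInstance
  set δ : ℝ := 8 * ε with hδdef
  have hδ : 0 < δ := by positivity
  have habs : ∀ z y : Fin n → ℝ, φ (δ⁻¹ • (z - y)) ≠ 0 → ∀ i, |z i - y i| < δ := by
    intro z y hne i
    have h := hsupp _ hne i
    rw [Pi.smul_apply, Pi.sub_apply, smul_eq_mul, abs_mul, abs_of_pos (inv_pos.2 hδ)] at h
    have hδi : δ * δ⁻¹ = 1 := mul_inv_cancel₀ hδ.ne'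
    nlinarith [abs_nonneg (z i - y i)]
  unfold maximal
  refine iSup_le fun P => iSup_le fun hP => iSup_le fun hxP => ?_
  obtain ⟨a, ha⟩ := hP
  have hs : 0 < P.side := P.side_pos
  obtain ⟨b, hb1, hb2⟩ := exists_mem_Ico_zpow (x := 4 * δ) (y := (2:ℝ)) (by positivity) one_lt_two
  set m : ℤ := max a (b + 1) + 1 with hm
  set S : ℝ := (2:ℝ) ^ m with hS
  have hSpos : 0 < S := by
    rw [hS]; exact zpow_pos (by norm_num) m
  have h2max : (2:ℝ) ^ (max a (b+1)) = max ((2:ℝ)^a) ((2:ℝ)^(b+1)) := by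
    rcases le_total a (b+1) with h | h
    · rw [max_eq_right h, max_eq_right (zpow_le_zpow_right₀ one_le_two h)]
    · rw [max_eq_left h, max_eq_left (zpow_le_zpow_right₀ one_le_two h)]
  have hSeq : S = 2 * max ((2:ℝ)^a) ((2:ℝ)^(b+1)) := by
    rw [hS, hm, zpow_add_one₀ two_ne_zero, h2max, mul_comm]
  have hb2' : (2:ℝ) ^ (b+1) ≤ 8 * δ := by
    rw [zpow_add_one₀ (two_ne_zero)]
    nlinarith [hb1]
  have hSge : P.side + 4 * δ ≤ S := by
    rw [hSeq, ha]
    have h1 := le_max_left ((2:ℝ)^a) ((2:ℝ)^(b+1))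
    have h2 := le_max_right ((2:ℝ)^a) ((2:ℝ)^(b+1))
    nlinarith [hb2.le]
  have hSle : S ≤ 2 * max P.side (8 * δ) := by
    rw [hSeq, ha]
    have h1 : max ((2:ℝ)^a) ((2:ℝ)^(b+1)) ≤ max ((2:ℝ)^a) (8*δ) := max_le_max le_rfl hb2'
    nlinarith [h1]
  set P' : Cube n := ⟨fun i => P.corner i - δ, S, hSpos⟩ with hP'def
  have hP'memP : P'.memP := ⟨m, rfl⟩
  have hxP' : x ∈ P'.toSet := by
    intro i
    obtain ⟨h1, h2⟩ := hxP i
    constructor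
    · show P.corner i - δ ≤ x i; linarith
    · show x i < (P.corner i - δ) + S; linarith
  set L : ℝ := min P.side (2 * δ) with hLdef
  have hLpos : 0 < L := lt_min hs (by positivity)
  set T : Set (Fin n → ℝ) := P'.toSet ∩ enlarge Q δ with hT
  set K0 : ℝ≥0∞ := ENNReal.ofReal ((δ ^ n)⁻¹ * L ^ n) with hK0
  have hKcont : Continuous fun p : (Fin n → ℝ) × (Fin n → ℝ) =>
      ENNReal.ofReal ((δ ^ n)⁻¹ * φ (δ⁻¹ • (p.1 - p.2))) :=
    ENNReal.continuous_ofReal.comp <| continuous_const.mul <| hsmooth.continuous.comp <|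
      ((continuous_fst.sub continuous_snd).const_smul δ⁻¹)
  have hPQmeas : MeasurableSet (P.toSet ∩ Q.toSet) :=
    P.measurableSet_toSet.inter Q.measurableSet_toSet
  have hTmem : ∀ z ∈ P.toSet ∩ Q.toSet, ∀ y : Fin n → ℝ,
      (∀ i, |z i - y i| < δ) → y ∈ T := by
    intro z hz y hy
    refine ⟨fun i => ?_, z, hz.2, fun i => by rw [abs_sub_comm]; exact (hy i).le⟩
    obtain ⟨h1, h2⟩ := hz.1 i
    obtain ⟨h3, h4⟩ := abs_lt.1 (hy i)
    constructor
    · show P.corner i - δ ≤ y i; linarith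
    · show y i < (P.corner i - δ) + S; linarith
  have key : ((mollify φ δ σ).restrict Q.toSet) P.toSet ≤ K0 * σ T := by
    have h1 : ((mollify φ δ σ).restrict Q.toSet) P.toSet
        = ∫⁻ z in P.toSet ∩ Q.toSet,
            ∫⁻ y, ENNReal.ofReal ((δ ^ n)⁻¹ * φ (δ⁻¹ • (z - y))) ∂σ ∂volume := by
      rw [mollify, Measure.restrict_apply P.measurableSet_toSet,
        withDensity_apply _ hPQmeas]
    rw [h1, lintegral_lintegral_swap hKcont.measurable.aemeasurable]
    have h2 : ∀ y : Fin n → ℝ,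
        (∫⁻ z in P.toSet ∩ Q.toSet, ENNReal.ofReal ((δ ^ n)⁻¹ * φ (δ⁻¹ • (z - y))) ∂volume)
          ≤ T.indicator (fun _ => K0) y := by
      intro y
      by_cases hyT : y ∈ T
      · rw [Set.indicator_of_mem hyT]
        set A : Set (Fin n → ℝ) := Set.pi Set.univ (fun i => Set.Ioo (y i - δ) (y i + δ))
          with hA
        have hAmeas : MeasurableSet A := MeasurableSet.univ_pi fun i => measurableSet_Ioo
        have hpt : ∀ z ∈ P.toSet ∩ Q.toSet,
            ENNReal.ofReal ((δ ^ n)⁻¹ * φ (δ⁻¹ • (z - y)))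
              ≤ A.indicator (fun _ => ENNReal.ofReal ((δ ^ n)⁻¹)) z := by
          intro z _
          by_cases hzA : z ∈ A
          · rw [Set.indicator_of_mem hzA]
            refine ENNReal.ofReal_le_ofReal ?_
            have h01 := hrange (δ⁻¹ • (z - y))
            have hinv : (0:ℝ) ≤ (δ ^ n)⁻¹ := inv_nonneg.2 (pow_nonneg hδ.le n)
            nlinarith [h01.1, h01.2]
          · rw [Set.indicator_of_notMem hzA]
            have hφ0 : φ (δ⁻¹ • (z - y)) = 0 := by
              by_contra hne
              apply hzA
              intro i _
              obtain ⟨hl, hr⟩ := abs_lt.1 (habs z y hne i)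
              exact ⟨by linarith, by linarith⟩
            simp [hφ0]
        have hvol : volume (A ∩ (P.toSet ∩ Q.toSet)) ≤ ENNReal.ofReal (L ^ n) := by
          have hsub : A ∩ (P.toSet ∩ Q.toSet) ⊆
              Set.pi Set.univ (fun i => Set.Ico (max (P.corner i) (y i - δ))
                (min (P.corner i + P.side) (y i + δ))) := by
            rintro z ⟨hzA, hzP, -⟩ i -
            obtain ⟨hzl, hzr⟩ := hzA i (Set.mem_univ i)
            obtain ⟨h2', h3'⟩ := hzP i
            exact ⟨max_le h2' hzl.le, lt_min h3' hzr⟩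
          refine (measure_mono hsub).trans ?_
          rw [volume_pi_pi]
          have hle : ∀ i : Fin n, volume (Set.Ico (max (P.corner i) (y i - δ))
              (min (P.corner i + P.side) (y i + δ))) ≤ ENNReal.ofReal L := by
            intro i
            rw [Real.volume_Ico]
            apply ENNReal.ofReal_le_ofReal
            rw [hLdef]
            rcases le_total P.side (2*δ) with h | h
            · rw [min_eq_left h]
              have h1 := le_max_left (P.corner i) (y i - δ)
              have h2 := min_le_left (P.corner i + P.side) (y i + δ)
              linarith
            · rw [min_eq_right h]
              have h1 := le_max_right (P.corner i) (y i - δ)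
              have h2 := min_le_right (P.corner i + P.side) (y i + δ)
              linarith
          calc (∏ i : Fin n, volume (Set.Ico (max (P.corner i) (y i - δ))
                (min (P.corner i + P.side) (y i + δ))))
              ≤ ∏ _i : Fin n, ENNReal.ofReal L := Finset.prod_le_prod' fun i _ => hle i
            _ = ENNReal.ofReal (L ^ n) := by
                rw [Finset.prod_const, Finset.card_univ, Fintype.card_fin,
                  ← ENNReal.ofReal_pow hLpos.le]
        calc (∫⁻ z in P.toSet ∩ Q.toSet,
                ENNReal.ofReal ((δ ^ n)⁻¹ * φ (δ⁻¹ • (z - y))) ∂volume)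
            ≤ ∫⁻ z in P.toSet ∩ Q.toSet,
                A.indicator (fun _ => ENNReal.ofReal ((δ ^ n)⁻¹)) z ∂volume :=
              setLIntegral_mono' hPQmeas hpt
          _ = ENNReal.ofReal ((δ ^ n)⁻¹) * volume (A ∩ (P.toSet ∩ Q.toSet)) := by
              rw [lintegral_indicator_const hAmeas, Measure.restrict_apply hAmeas]
          _ ≤ ENNReal.ofReal ((δ ^ n)⁻¹) * ENNReal.ofReal (L ^ n) :=
              mul_le_mul_right hvol _
          _ = K0 := by rw [hK0, ENNReal.ofReal_mul (by positivity)]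
      · rw [Set.indicator_of_notMem hyT]
        have hz0 : ∀ z ∈ P.toSet ∩ Q.toSet,
            ENNReal.ofReal ((δ ^ n)⁻¹ * φ (δ⁻¹ • (z - y))) = 0 := by
          intro z hz
          have hφ0 : φ (δ⁻¹ • (z - y)) = 0 := by
            by_contra hne
            exact hyT (hTmem z hz y (habs z y hne))
          simp [hφ0]
        have := setLIntegral_congr_fun (μ := volume) (g := fun _ => (0:ℝ≥0∞)) hPQmeas hz0
        rw [this]
        simp
    calc (∫⁻ y, ∫⁻ z in P.toSet ∩ Q.toSet,
            ENNReal.ofReal ((δ ^ n)⁻¹ * φ (δ⁻¹ • (z - y))) ∂volume ∂σ)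
        ≤ ∫⁻ y, T.indicator (fun _ => K0) y ∂σ := lintegral_mono h2
      _ ≤ K0 * σ T := lintegral_indicator_const_le _ _
  have hvolP : volume P.toSet = ENNReal.ofReal (P.side ^ n) := P.volume_toSet
  have hvolP' : volume P'.toSet = ENNReal.ofReal (S ^ n) := P'.volume_toSet
  have hratio : K0 / volume P.toSet ≤ ENNReal.ofReal ((16:ℝ)^n) / volume P'.toSet := by
    rw [hvolP, hvolP', hK0, ← ENNReal.ofReal_div_of_pos (by positivity),
      ← ENNReal.ofReal_div_of_pos (by positivity)]
    apply ENNReal.ofReal_le_ofReal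
    rw [div_le_div_iff₀ (by positivity) (by positivity)]
    have hLS : L * S ≤ 16 * (δ * P.side) := by
      rcases le_total P.side (8*δ) with h | h
      · have hS16 : S ≤ 16 * δ := by rw [max_eq_right h] at hSle; linarith
        have hLs : L ≤ P.side := min_le_left _ _
        nlinarith [hLpos.le, hSpos.le]
      · have hS2 : S ≤ 2 * P.side := by rw [max_eq_left h] at hSle; linarith
        have hL2 : L ≤ 2*δ := min_le_right _ _
        nlinarith [hLpos.le, hSpos.le]
    have hpow : (L * S)^n ≤ (16 * (δ * P.side))^n :=
      pow_le_pow_left₀ (by positivity) hLS n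
    have hδn : (0:ℝ) < δ ^ n := by positivity
    rw [mul_pow, mul_pow, mul_pow] at hpow
    have h3 := mul_le_mul_of_nonneg_left hpow (le_of_lt (inv_pos.2 hδn))
    calc (δ^n)⁻¹ * L^n * S^n = (δ^n)⁻¹ * (L^n * S^n) := by ring
      _ ≤ (δ^n)⁻¹ * (16^n * (δ^n * P.side^n)) := h3
      _ = 16^n * P.side^n := by field_simp
  have hrestr : σ T = (σ.restrict (enlarge Q δ)) P'.toSet := by
    rw [Measure.restrict_apply P'.measurableSet_toSet]
  calc ((mollify φ δ σ).restrict Q.toSet) P.toSet / volume P.toSet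
      ≤ (K0 * σ T) / volume P.toSet := ENNReal.div_le_div_right key _
    _ = σ T * (K0 / volume P.toSet) := by
        rw [mul_comm K0, mul_div_assoc]
    _ ≤ σ T * (ENNReal.ofReal ((16:ℝ)^n) / volume P'.toSet) := mul_le_mul_right hratio _
    _ = ENNReal.ofReal ((16:ℝ)^n) * ((σ.restrict (enlarge Q δ)) P'.toSet / volume P'.toSet) := by
        rw [← hrestr, ← mul_div_assoc, mul_comm (σ T), mul_div_assoc]
    _ ≤ ENNReal.ofReal ((16:ℝ)^n) * ⨆ (R : Cube n) (_ : R.memP) (_ : x ∈ R.toSet),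
          (σ.restrict (enlarge Q δ)) R.toSet / volume R.toSet :=
        by
          refine mul_le_mul_right ?_ _
          refine le_iSup_of_le P' ?_
          refine le_iSup_of_le hP'memP ?_
          exact le_iSup_of_le hxP' le_rfl
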